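/- In the adjoint-triple setting with 𝒜 and ℬ abelian categories, let B be an object of ℬ and let A be the image of θ_B : L B ⟶ R B in the abelian category 𝒜 (the middle object of the epi–mono factorization of θ_B). Then G A is isomorphic to B, every subobject of A killed by G is zero, and every quotient of A killed by G is zero. (Note that G is exact, since it admits both a left and a right adjoint.) -/

import Mathlib

open CategoryTheory CategoryTheory.Limits

/-- In the adjoint-triple setting with abelian categories (`L ⊣ G ⊣ R`, unit of `L ⊣ G`
invertible, counit of `G ⊣ R` invertible), the image `A` of the canonical morphism
`θ_b = L(inv(ε₂_b)) ≫ ε₁_{R b} : L b ⟶ R b` satisfies: `G A ≅ b`, every subobject of `A`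
killed by `G` is zero, and every quotient of `A` killed by `G` is zero. -/
theorem image_of_theta_is_minimal_extension
    {A : Type*} [Category A] [Abelian A] {B : Type*} [Category B] [Abelian B]
    (L R : B ⥤ A) (G : A ⥤ B)
    (adj₁ : L ⊣ G) (adj₂ : G ⊣ R)
    [IsIso adj₁.unit] [IsIso adj₂.counit]
    (b : B) :
    Nonempty (G.obj (image (L.map (inv (adj₂.counit.app b)) ≫ adj₁.counit.app (R.obj b))) ≅ b) ∧
    (∀ (a' : A) (m : a' ⟶ image (L.map (inv (adj₂.counit.app b)) ≫ adj₁.counit.app (R.obj b))),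
      Mono m → IsZero (G.obj a') → IsZero a') ∧
    (∀ (q : A) (e : image (L.map (inv (adj₂.counit.app b)) ≫ adj₁.counit.app (R.obj b)) ⟶ q),
      Epi e → IsZero (G.obj q) → IsZero q) := by
  haveI : L.IsLeftAdjoint := adj₁.isLeftAdjoint
  haveI : G.IsLeftAdjoint := adj₂.isLeftAdjoint
  haveI : G.IsRightAdjoint := adj₁.isRightAdjoint
  haveI : R.IsRightAdjoint := adj₂.isRightAdjoint
  haveI : G.PreservesEpimorphisms := Functor.preservesEpimorphisms_of_adjunction adj₂
  haveI : G.PreservesMonomorphisms := Functor.preservesMonomorphisms_of_adjunction adj₁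
  set θ : L.obj b ⟶ R.obj b :=
    L.map (inv (adj₂.counit.app b)) ≫ adj₁.counit.app (R.obj b) with hθ
  -- G.map θ is an isomorphism
  have hGcounit : IsIso (G.map (adj₁.counit.app (R.obj b))) := by
    have h := adj₁.right_triangle_components (R.obj b)
    haveI : IsIso (adj₁.unit.app (G.obj (R.obj b))) := inferInstance
    have h2 : inv (adj₁.unit.app (G.obj (R.obj b))) = G.map (adj₁.counit.app (R.obj b)) :=
      IsIso.inv_eq_of_hom_inv_id h
    rw [← h2]
    infer_instance
  haveI : IsIso (G.map θ) := by
    rw [hθ, G.map_comp]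
    haveI : IsIso (G.map (L.map (inv (adj₂.counit.app b)))) := inferInstance
    haveI := hGcounit
    infer_instance
  -- epi-mono factorization
  have hfac : factorThruImage θ ≫ image.ι θ = θ := image.fac θ
  have hGfac : G.map (factorThruImage θ) ≫ G.map (image.ι θ) = G.map θ := by
    rw [← G.map_comp, hfac]
  haveI : Epi (G.map (factorThruImage θ)) := inferInstance
  haveI : Mono (G.map (image.ι θ)) := inferInstance
  haveI : IsIso (G.map (factorThruImage θ)) := by
    haveI : IsSplitMono (G.map (factorThruImage θ)) :=
      IsSplitMono.mk' ⟨G.map (image.ι θ) ≫ inv (G.map θ), by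
        rw [← Category.assoc, hGfac, IsIso.hom_inv_id]⟩
    exact isIso_of_epi_of_isSplitMono _
  refine ⟨⟨(asIso (G.map (factorThruImage θ))).symm ≪≫ (asIso (adj₁.unit.app b)).symm⟩, ?_, ?_⟩
  · intro a' m hm hz
    have hf : m ≫ image.ι θ = 0 := by
      have h0 : (adj₂.homEquiv a' b).symm (m ≫ image.ι θ) = 0 :=
        hz.eq_zero_of_src _
      have := (adj₂.homEquiv a' b).apply_symm_apply (m ≫ image.ι θ)
      rw [h0] at this
      rw [← this, Adjunction.homEquiv_unit, R.map_zero, comp_zero]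
    haveI : Mono (m ≫ image.ι θ) := mono_comp _ _
    exact IsZero.of_mono_eq_zero _ hf
  · intro q e he hz
    have hf : factorThruImage θ ≫ e = 0 := by
      have h0 : (adj₁.homEquiv b q) (factorThruImage θ ≫ e) = 0 :=
        hz.eq_zero_of_tgt _
      have := (adj₁.homEquiv b q).symm_apply_apply (factorThruImage θ ≫ e)
      rw [h0] at this
      rw [← this, Adjunction.homEquiv_counit, L.map_zero, zero_comp]
    haveI : Epi (factorThruImage θ ≫ e) := epi_comp _ _
    exact IsZero.of_epi_eq_zero _ hf
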